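/- Under the setup of the mixed-bias identity: if H = H* then G̃(q, H*) = G(q*) for every square-integrable q; and if q = q* then G̃(q*, H) = G(q*) for every square-integrable σ(S_t,A_t)-measurable H. -/

import Mathlib

open MeasureTheory ProbabilityTheory

lemma memL2_mul_integrable {Ω : Type*} [MeasurableSpace Ω] {P : Measure Ω}
    {f g : Ω → ℝ} (hf : MemLp f 2 P) (hg : MemLp g 2 P) :
    Integrable (fun ω => f ω * g ω) P := by
  have h : MemLp (f • g) 1 P := hg.smul hf
    (hpqr := ⟨by rw [inv_one]; exact ENNReal.inv_two_add_inv_two⟩)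
  rw [← memLp_one_iff_integrable]
  exact h

/-- Key: if `f` is `m`-measurable and L², then `E[f Γ] = E[f E[Γ|m]]`. -/
lemma integral_mul_condexp_key {Ω : Type*} {m : MeasurableSpace Ω}
    [m0 : MeasurableSpace Ω] {P : Measure Ω}
    [IsProbabilityMeasure P] (hm : m ≤ m0)
    {f Γ : Ω → ℝ} (hfm : StronglyMeasurable[m] f)
    (hf : MemLp f 2 P) (hΓ : MemLp Γ 2 P) :
    ∫ ω, f ω * Γ ω ∂P = ∫ ω, f ω * (P[Γ|m]) ω ∂P := by
  have hΓint : Integrable Γ P := hΓ.integrable (by norm_num)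
  have h1 : Integrable (fun ω => f ω * Γ ω) P := memL2_mul_integrable hf hΓ
  have hpull : P[f * Γ|m] =ᵐ[P] f * P[Γ|m] :=
    condExp_mul_of_stronglyMeasurable_left hfm h1 hΓint
  calc ∫ ω, f ω * Γ ω ∂P = ∫ ω, (P[f * Γ|m]) ω ∂P := (integral_condExp hm).symm
    _ = ∫ ω, (f * P[Γ|m]) ω ∂P := integral_congr_ae hpull
    _ = ∫ ω, f ω * (P[Γ|m]) ω ∂P := rfl

/-- Double robustness: under the mixed-bias setup, `G̃(q, H*) = G(q*)` for every
square-integrable `q`, and `G̃(q*, H) = G(q*)` for every square-integrable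
`σ(S,A)`-measurable `H`, where `G(q) = γ^{t−1} E[H*(S,A) q(S,A)]`,
`q*(s,a) = E[Γ|S=s,A=a]` and
`G̃(q,H) = G(q) + γ^{t−1} E[H(S,A)(Γ − q(S,A))]`. -/
theorem double_robustness
    {Ω 𝓢 𝓐 : Type*} [MeasurableSpace Ω] [MeasurableSpace 𝓢] [MeasurableSpace 𝓐]
    (P : Measure Ω) [IsProbabilityMeasure P]
    (t : ℕ) (γ : ℝ) (hγ : γ ∈ Set.Ioc (0 : ℝ) 1)
    (S : Ω → 𝓢) (A : Ω → 𝓐) (hS : Measurable S) (hA : Measurable A)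
    (Γ : Ω → ℝ) (hΓ : MemLp Γ 2 P)
    (qstar : 𝓢 → 𝓐 → ℝ) (hqstarMeas : Measurable (Function.uncurry qstar))
    (hqstar : (fun ω => qstar (S ω) (A ω))
      =ᵐ[P] P[Γ|MeasurableSpace.comap (fun ω => (S ω, A ω)) inferInstance])
    (hqstarL2 : MemLp (fun ω => qstar (S ω) (A ω)) 2 P)
    (Hstar : 𝓢 → 𝓐 → ℝ) (hHstarMeas : Measurable (Function.uncurry Hstar))
    (hHstarL2 : MemLp (fun ω => Hstar (S ω) (A ω)) 2 P) :
    (∀ q : 𝓢 → 𝓐 → ℝ, Measurable (Function.uncurry q) →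
      MemLp (fun ω => q (S ω) (A ω)) 2 P →
      γ ^ (t - 1) * ∫ ω, Hstar (S ω) (A ω) * q (S ω) (A ω) ∂P
        + γ ^ (t - 1) * ∫ ω, Hstar (S ω) (A ω) * (Γ ω - q (S ω) (A ω)) ∂P
      = γ ^ (t - 1) * ∫ ω, Hstar (S ω) (A ω) * qstar (S ω) (A ω) ∂P) ∧
    (∀ H : 𝓢 → 𝓐 → ℝ, Measurable (Function.uncurry H) →
      MemLp (fun ω => H (S ω) (A ω)) 2 P →
      γ ^ (t - 1) * ∫ ω, Hstar (S ω) (A ω) * qstar (S ω) (A ω) ∂P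
        + γ ^ (t - 1) * ∫ ω, H (S ω) (A ω) * (Γ ω - qstar (S ω) (A ω)) ∂P
      = γ ^ (t - 1) * ∫ ω, Hstar (S ω) (A ω) * qstar (S ω) (A ω) ∂P) := by
  have hm : MeasurableSpace.comap (fun ω => (S ω, A ω)) inferInstance ≤ ‹MeasurableSpace Ω› :=
    (hS.prodMk hA).comap_le
  have hSAm : Measurable[MeasurableSpace.comap (fun ω => (S ω, A ω)) inferInstance]
      (fun ω => (S ω, A ω)) := Measurable.of_comap_le le_rfl
  have hmeas_m : ∀ (H : 𝓢 → 𝓐 → ℝ), Measurable (Function.uncurry H) →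
      StronglyMeasurable[MeasurableSpace.comap (fun ω => (S ω, A ω)) inferInstance]
        (fun ω => H (S ω) (A ω)) := fun H hH =>
    (hH.comp hSAm).stronglyMeasurable
  -- for any σ(S,A)-measurable L² function f : ∫ f·Γ = ∫ f·q*
  have key : ∀ (H : 𝓢 → 𝓐 → ℝ), Measurable (Function.uncurry H) →
      MemLp (fun ω => H (S ω) (A ω)) 2 P →
      ∫ ω, H (S ω) (A ω) * Γ ω ∂P = ∫ ω, H (S ω) (A ω) * qstar (S ω) (A ω) ∂P := by
    intro H hH hHL2
    rw [integral_mul_condexp_key hm (hmeas_m H hH) hHL2 hΓ]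
    refine integral_congr_ae ?_
    filter_upwards [hqstar] with ω hω
    rw [hω]
  constructor
  · intro q hq hqL2
    congr 1
    have h1 : Integrable (fun ω => Hstar (S ω) (A ω) * q (S ω) (A ω)) P :=
      memL2_mul_integrable hHstarL2 hqL2
    have h2 : Integrable (fun ω => Hstar (S ω) (A ω) * Γ ω) P :=
      memL2_mul_integrable hHstarL2 hΓ
    have hsub : ∫ ω, Hstar (S ω) (A ω) * (Γ ω - q (S ω) (A ω)) ∂P
        = ∫ ω, Hstar (S ω) (A ω) * Γ ω ∂P - ∫ ω, Hstar (S ω) (A ω) * q (S ω) (A ω) ∂P := by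
      simp_rw [mul_sub]
      exact integral_sub h2 h1
    rw [hsub, key Hstar hHstarMeas hHstarL2]
    ring
  · intro H hH hHL2
    have h1 : Integrable (fun ω => H (S ω) (A ω) * qstar (S ω) (A ω)) P :=
      memL2_mul_integrable hHL2 hqstarL2
    have h2 : Integrable (fun ω => H (S ω) (A ω) * Γ ω) P :=
      memL2_mul_integrable hHL2 hΓ
    have hsub : ∫ ω, H (S ω) (A ω) * (Γ ω - qstar (S ω) (A ω)) ∂P
        = ∫ ω, H (S ω) (A ω) * Γ ω ∂P - ∫ ω, H (S ω) (A ω) * qstar (S ω) (A ω) ∂P := by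
      simp_rw [mul_sub]
      exact integral_sub h2 h1
    rw [hsub, key H hH hHL2]
    ring
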